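/- If T is a collection of phylogenetic trees on X all displayed by a binary level-1 network N, and N' is a binary level-1 network on X whose softwired cluster system contains the union of the cluster systems of all trees in T, and moreover R(N) equals the union of the triplet systems of the trees in T, then R(N) ⊆ R(N'). -/

import Mathlib

open Relation

noncomputable section

/-- The interior vertices of a path represented as the list of its vertices. -/
def listInterior {α : Type*} (p : List α) : List α := p.tail.dropLast

/-- A (candidate) phylogenetic network: a finite directed graph together with an
injective labelling of a set `X` into its vertices (the leaves). -/
structure Net (X : Type) : Type 1 where
  V : Type
  finV : Finite V
  arc : V → V → Prop
  leaf : X → V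
  leaf_inj : Function.Injective leaf

attribute [instance] Net.finV

namespace Net

variable {X : Type} (N : Net X)

def outdeg (v : N.V) : ℕ := {w | N.arc v w}.ncard
def indeg (v : N.V) : ℕ := {u | N.arc u v}.ncard
def IsLeaf (v : N.V) : Prop := ∃ x, N.leaf x = v
def IsHybrid (v : N.V) : Prop := 2 ≤ N.indeg v

/-- The axioms of a rooted phylogenetic network on `X`: acyclic, the leaves are exactly
the vertices of out-degree 0 (and have in-degree one), there is a root of in-degree 0 and
out-degree at least 2 from which every vertex is reachable, and every non-root interior
vertex is either a split vertex or a hybrid vertex. -/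
def IsPhylo : Prop :=
  (∀ v, ¬ TransGen N.arc v v) ∧
  (∀ v, N.outdeg v = 0 ↔ N.IsLeaf v) ∧
  (∀ x, N.indeg (N.leaf x) = 1) ∧
  (∃ ρ, N.indeg ρ = 0 ∧ 2 ≤ N.outdeg ρ ∧ ∀ v, ReflTransGen N.arc ρ v) ∧
  (∀ v, ¬ N.IsLeaf v →
    N.indeg v = 0 ∨ (N.indeg v = 1 ∧ 2 ≤ N.outdeg v) ∨ (2 ≤ N.indeg v ∧ 1 ≤ N.outdeg v))

/-- A binary phylogenetic network: the root and split vertices have out-degree 2,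
hybrid vertices have in-degree 2 and out-degree 1. -/
def IsBinary : Prop :=
  N.IsPhylo ∧
  ∀ v, N.IsLeaf v ∨ (N.indeg v ≤ 1 ∧ N.outdeg v = 2) ∨ (N.indeg v = 2 ∧ N.outdeg v = 1)

/-- The underlying undirected graph. -/
def ugraph : SimpleGraph N.V where
  Adj v w := v ≠ w ∧ (N.arc v w ∨ N.arc w v)
  symm := ⟨fun _ _ h => ⟨Ne.symm h.1, h.2.symm⟩⟩
  loopless := ⟨fun _ h => h.1 rfl⟩

/-- A binary level-1 network: binary, every cycle of the underlying graph has at least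
4 vertices, and every cycle of the underlying graph contains at most one hybrid vertex
(equivalently, every biconnected component contains at most one hybrid vertex). -/
def IsLevel1 : Prop :=
  N.IsBinary ∧
  (∀ (c : N.V) (p : N.ugraph.Walk c c), p.IsCycle → 4 ≤ p.length) ∧
  (∀ (c : N.V) (p : N.ugraph.Walk c c), p.IsCycle →
    ∀ v ∈ p.support, ∀ w ∈ p.support, N.IsHybrid v → N.IsHybrid w → v = w)

/-- The number of galls of a binary level-1 network (each gall contains exactly one
hybrid vertex, and conversely). -/
def gallCount : ℕ := {v : N.V | N.IsHybrid v}.ncard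

def numVertices : ℕ := Nat.card N.V
def numArcs : ℕ := {p : N.V × N.V | N.arc p.1 p.2}.ncard

/-- An arc whose deletion disconnects the underlying graph. -/
def CutArc (u v : N.V) : Prop :=
  N.arc u v ∧ ¬ (N.ugraph.deleteEdges {s(u, v)}).Connected

/-- The number `c_N` of non-trivial cut arcs (cut arcs whose head is not a leaf). -/
def numNontrivialCutArcs : ℕ :=
  {p : N.V × N.V | N.CutArc p.1 p.2 ∧ ¬ N.IsLeaf p.2}.ncard

/-- The cluster of a vertex: the set of leaf labels below or equal to it. -/
def cluster (v : N.V) : Set X := {x | ReflTransGen N.arc v (N.leaf x)}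

/-- The hardwired cluster system. -/
def clusterSystem : Set (Set X) := {C | ∃ v, C = N.cluster v}

/-- A network whose every vertex has in-degree at most 1 is a tree. -/
def IsTree : Prop := ∀ v, N.indeg v ≤ 1

/-- A directed path from `u` to `v`, given as the list of all its vertices. -/
def IsDiPath (p : List N.V) (u v : N.V) : Prop :=
  p.Chain' N.arc ∧ p.head? = some u ∧ p.getLast? = some v ∧ p.Nodup

/-- `N` displays `T`: a subgraph of `N` is a subdivision of `T`, i.e. there is an
injection of the vertices of `T` into those of `N`, fixing the leaf labels, together
with internally disjoint directed paths realizing the arcs of `T`. -/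
def Displays (T : Net X) : Prop :=
  ∃ (φ : T.V → N.V) (P : T.V → T.V → List N.V),
    Function.Injective φ ∧
    (∀ x, φ (T.leaf x) = N.leaf x) ∧
    (∀ u v, T.arc u v → N.IsDiPath (P u v) (φ u) (φ v)) ∧
    (∀ u v, T.arc u v → ∀ w ∈ listInterior (P u v), ∀ z, φ z ≠ w) ∧
    (∀ u v u' v', T.arc u v → T.arc u' v' → (u, v) ≠ (u', v') →
      ∀ w ∈ listInterior (P u v), w ∉ listInterior (P u' v'))

/-- The softwired cluster system: all clusters of phylogenetic trees on `X`
displayed by `N`. -/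
def softwired : Set (Set X) :=
  {C | ∃ T : Net X, T.IsPhylo ∧ T.IsTree ∧ N.Displays T ∧ C ∈ T.clusterSystem}

/-- The triplet `ab|c` is consistent with `N`. -/
def Consistent (a b c : X) : Prop :=
  a ≠ b ∧ a ≠ c ∧ b ≠ c ∧
  ∃ v w : N.V, v ≠ w ∧ ∃ p₁ p₂ p₃ p₄ : List N.V,
    N.IsDiPath p₁ v (N.leaf c) ∧ N.IsDiPath p₂ v w ∧
    N.IsDiPath p₃ w (N.leaf a) ∧ N.IsDiPath p₄ w (N.leaf b) ∧
    [p₁, p₂, p₃, p₄].Pairwise (fun p q => ∀ x ∈ listInterior p, x ∉ listInterior q)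

/-- The triplet system `R(N)` induced by `N`; the triplet `ab|c` is represented
by the pair `(s(a,b), c)`. -/
def tripletSet : Set (Sym2 X × X) :=
  {t | ∃ a b : X, t.1 = s(a, b) ∧ N.Consistent a b t.2}

/-- Equivalence of networks: an isomorphism of directed graphs fixing leaf labels. -/
def Equiv (N' : Net X) : Prop :=
  ∃ e : N.V ≃ N'.V, (∀ u v, N.arc u v ↔ N'.arc (e u) (e v)) ∧
    ∀ x, e (N.leaf x) = N'.leaf x

/-- A vertex lying on some cycle of the underlying graph (i.e. on a gall). -/
def OnGall (v : N.V) : Prop :=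
  ∃ (c : N.V) (p : N.ugraph.Walk c c), p.IsCycle ∧ v ∈ p.support

/-- A simple level-1 network: exactly one gall, and every leaf is adjacent to a
vertex of that gall. -/
def IsSimple : Prop :=
  N.gallCount = 1 ∧ ∀ (x : X) (u : N.V), N.arc u (N.leaf x) → N.OnGall u

/-- 4-outwards: the underlying graph has no cycle of length four or less. -/
def FourOutwards : Prop :=
  ∀ (c : N.V) (p : N.ugraph.Walk c c), p.IsCycle → 5 ≤ p.length

/-- Saturated: no vertex is incident with more than one cut arc. -/
def IsSaturated : Prop :=
  ∀ v : N.V, {p : N.V × N.V | N.CutArc p.1 p.2 ∧ (p.1 = v ∨ p.2 = v)}.ncard ≤ 1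

/-- A highest cut arc: no cut arc lies above it. -/
def HighestCutArc (u v : N.V) : Prop :=
  N.CutArc u v ∧ ¬ ∃ u' v', N.CutArc u' v' ∧ ReflTransGen N.arc v' u

/-- The partition `Cut(N)` of `X` induced by the highest cut arcs. -/
def cutPartition : Set (Set X) :=
  {C | ∃ u v, N.HighestCutArc u v ∧ C = N.cluster v}

/-- `S` is an SN-set of `R(N)`: there is no triplet `xy|z ∈ R(N)` with
`x, z ∈ S` and `y ∉ S`. -/
def IsSNSet (S : Set X) : Prop :=
  ∀ a b c : X, N.Consistent a b c → a ∈ S → c ∈ S → b ∈ S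

/-- A maximal SN-set: a non-trivial SN-set not strictly contained in any
non-trivial SN-set. -/
def IsMaximalSNSet (S : Set X) : Prop :=
  N.IsSNSet S ∧ S ≠ Set.univ ∧
  ∀ S' : Set X, N.IsSNSet S' → S' ≠ Set.univ → S ⊆ S' → S = S'

/-- Every gall (cycle of the underlying graph) has exactly three outgoing arcs. -/
def EveryGallThreeOutgoing : Prop :=
  ∀ (c : N.V) (p : N.ugraph.Walk c c), p.IsCycle →
    {q : N.V × N.V | N.arc q.1 q.2 ∧ q.1 ∈ p.support ∧ q.2 ∉ p.support}.ncard = 3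

end Net

end

/- ===== auxiliary infrastructure ===== -/
namespace Aux
open Relation List

variable {V : Type} {r : V → V → Prop}

/-- Raw directed path. -/
def RP (r : V → V → Prop) (p : List V) (u v : V) : Prop :=
  p.Chain' r ∧ p.head? = some u ∧ p.getLast? = some v ∧ p.Nodup

theorem rp_ne_nil {p : List V} {u v : V} (h : RP r p u v) : p ≠ [] := by
  rintro rfl; simp [RP] at h

theorem eq_concat_of_getLast? {p : List V} {v : V} (h : p.getLast? = some v) :
    ∃ p', p = p' ++ [v] :=
  ⟨p.dropLast, (List.dropLast_append_getLast? v h).symm⟩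

theorem head_mem' {p : List V} {u v : V} (h : RP r p u v) : u ∈ p := by
  cases p with
  | nil => simp [RP] at h
  | cons a l =>
    have h2 := h.2.1; simp at h2; subst h2; exact List.mem_cons_self

theorem last_mem' {p : List V} {u v : V} (h : RP r p u v) : v ∈ p := by
  obtain ⟨p', rfl⟩ := eq_concat_of_getLast? h.2.2.1
  simp

theorem chain'_rtg_head : ∀ {l : List V} {u x : V}, List.Chain' r (u :: l) → x ∈ u :: l →
    ReflTransGen r u x := by
  intro l
  induction l with
  | nil => intro u x _ hx; simp at hx; subst hx; rfl
  | cons b l ih =>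
    intro u x hc hx
    rcases List.mem_cons.mp hx with h | h
    · subst h; rfl
    · have hc' := List.isChain_cons_cons.mp hc
      exact (ih hc'.2 h).head hc'.1

theorem rtg_head {p : List V} {u v x : V} (h : RP r p u v) (hx : x ∈ p) :
    ReflTransGen r u x := by
  cases p with
  | nil => simp at hx
  | cons a l =>
    have h2 := h.2.1; simp at h2; subst h2
    exact chain'_rtg_head h.1 hx

theorem chain'_rtg_last : ∀ {l : List V} {u v x : V}, List.Chain' r (u :: l) →
    (u :: l).getLast? = some v → x ∈ u :: l → ReflTransGen r x v := by
  intro l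
  induction l with
  | nil => intro u v x _ hl hx; simp at hl hx; subst hl; subst hx; rfl
  | cons b l ih =>
    intro u v x hc hl hx
    have hc' := List.isChain_cons_cons.mp hc
    have hl' : (b :: l).getLast? = some v := by
      rw [List.getLast?_cons_cons] at hl; exact hl
    rcases List.mem_cons.mp hx with h | h
    · subst h
      exact (ih hc'.2 hl' (List.mem_cons_self)).head hc'.1
    · exact ih hc'.2 hl' h

theorem rtg_last {p : List V} {u v x : V} (h : RP r p u v) (hx : x ∈ p) :
    ReflTransGen r x v := by
  cases p with
  | nil => simp at hx
  | cons a l => exact chain'_rtg_last h.1 h.2.2.1 hx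

theorem rtg_trans_ne (hac : ∀ a, ¬ TransGen r a a) {a b : V} (h : ReflTransGen r a b)
    (hne : a ≠ b) : TransGen r a b := by
  rcases h.cases_head with h | ⟨c, hc, hcb⟩
  · exact absurd h hne
  · exact TransGen.head' hc hcb

theorem rtg_antisymm (hac : ∀ a, ¬ TransGen r a a) {a b : V} (h1 : ReflTransGen r a b)
    (h2 : ReflTransGen r b a) : a = b := by
  by_contra hne
  exact hac a (Relation.TransGen.trans_left (rtg_trans_ne hac h1 hne) h2)

theorem exists_rp (hac : ∀ a, ¬ TransGen r a a) {u v : V} (h : ReflTransGen r u v) :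
    ∃ p, RP r p u v := by
  induction h with
  | refl => exact ⟨[u], by simp [RP, List.Chain', List.isChain_singleton]⟩
  | @tail b c hub hbc ih =>
    obtain ⟨p, hp⟩ := ih
    have hcp : c ∉ p := by
      intro hcmem
      exact hac c (Relation.TransGen.trans_right (rtg_last hp hcmem) (TransGen.single hbc))
    refine ⟨p ++ [c], ?_, ?_, ?_, ?_⟩
    · simp only [List.Chain']
      rw [List.isChain_append]
      refine ⟨hp.1, List.isChain_singleton _, ?_⟩
      intro x hx y hy
      rw [hp.2.2.1] at hx; simp at hx hy; subst hx; subst hy; exact hbc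
    · rw [List.head?_append_of_ne_nil _ (rp_ne_nil hp)]; exact hp.2.1
    · simp
    · rw [List.nodup_append']
      exact ⟨hp.2.2.2, List.nodup_singleton _, by simpa using hcp⟩

theorem mem_of_mem_interior {p : List V} {x : V} (h : x ∈ listInterior p) : x ∈ p :=
  (List.tail_sublist p).subset ((List.dropLast_sublist _).subset h)

theorem mem_interior_iff {p : List V} {u v x : V} (h : RP r p u v) :
    x ∈ listInterior p ↔ x ∈ p ∧ x ≠ u ∧ x ≠ v := by
  obtain ⟨hc, hh, hl, hn⟩ := h
  obtain ⟨p', rfl⟩ : ∃ p', p = p' ++ [v] := eq_concat_of_getLast? hl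
  cases p' with
  | nil =>
    simp at hh; subst hh
    simp [listInterior]
  | cons a t =>
    have hau : a = u := by simpa using hh
    have hint : listInterior ((a :: t) ++ [v]) = t := by simp [listInterior]
    rw [hint]
    have hn' := hn
    rw [List.cons_append, List.nodup_cons] at hn'
    have hvn : v ∉ a :: t := by
      intro hv
      have := List.nodup_append'.mp hn
      exact this.2.2 hv (by simp)
    constructor
    · intro hx
      refine ⟨by simp [hx], ?_, ?_⟩
      · rintro rfl; exact hn'.1 (by rw [hau]; simp [hx])
      · rintro rfl; exact hvn (by simp [hx])
    · rintro ⟨hx, hxu, hxv⟩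
      rw [List.cons_append, List.mem_cons] at hx
      rcases hx with h | h
      · exact absurd (h.trans hau) hxu
      · rcases List.mem_append.mp h with h | h
        · exact h
        · simp at h; exact absurd h hxv

theorem rtg_comparable (up : ∀ ⦃a b c : V⦄, r a c → r b c → a = b) {a b x : V}
    (ha : ReflTransGen r a x) (hb : ReflTransGen r b x) :
    ReflTransGen r a b ∨ ReflTransGen r b a := by
  induction hb with
  | refl => exact Or.inl ha
  | @tail y z hby hyz ih =>
    rcases ha.cases_tail with h | ⟨w, haw, hwz⟩
    · subst h; exact Or.inr (hby.tail hyz)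
    · have : w = y := up hwz hyz
      subst this
      exact ih haw

theorem sibling (hac : ∀ a, ¬ TransGen r a a) (up : ∀ ⦃a b c : V⦄, r a c → r b c → a = b)
    {v y₁ y₂ x : V} (h1 : r v y₁) (h2 : r v y₂) (hne : y₁ ≠ y₂)
    (ha : ReflTransGen r y₁ x) (hb : ReflTransGen r y₂ x) : False := by
  rcases rtg_comparable up ha hb with h | h
  · rcases h.cases_tail with h | ⟨z, hz, hzy⟩
    · exact hne h.symm
    · have hzv : z = v := up hzy h2
      rw [hzv] at hz
      exact hac v (TransGen.head' h1 hz)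
  · rcases h.cases_tail with h | ⟨z, hz, hzy⟩
    · exact hne h
    · have hzv : z = v := up hzy h1
      rw [hzv] at hz
      exact hac v (TransGen.head' h2 hz)

theorem rp_dropLast {p : List V} {u v z : V} (hp : RP r (p ++ [v]) u v) (hpne : p ≠ [])
    (hz : p.getLast? = some z) : RP r p u z := by
  obtain ⟨hc, hh, hl, hn⟩ := hp
  refine ⟨(List.isChain_append.mp hc).1, ?_, hz, (List.nodup_append'.mp hn).1⟩
  rwa [List.head?_append_of_ne_nil _ hpne] at hh

theorem rp_unique (hac : ∀ a, ¬ TransGen r a a) (up : ∀ ⦃a b c : V⦄, r a c → r b c → a = b) :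
    ∀ (n : ℕ) (p q : List V) (u v : V), p.length ≤ n → RP r p u v → RP r q u v → p = q := by
  intro n
  induction n with
  | zero =>
    intro p q u v hlen hp _
    exact absurd (List.length_eq_zero_iff.mp (Nat.le_zero.mp hlen)) (by
      rintro rfl; simp [RP] at hp)
  | succ n ih =>
    intro p q u v hlen hp hq
    obtain ⟨p', rfl⟩ : ∃ p', p = p' ++ [v] := eq_concat_of_getLast? hp.2.2.1
    obtain ⟨q', rfl⟩ : ∃ q', q = q' ++ [v] := eq_concat_of_getLast? hq.2.2.1
    cases p' with
    | nil =>
      have hu : u = v := by have := hp.2.1; simp at this; exact this.symm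
      subst hu
      cases q' with
      | nil => rfl
      | cons a t =>
        exfalso
        have hh := hq.2.1
        rw [List.head?_append_of_ne_nil _ (by simp : a :: t ≠ [])] at hh
        simp at hh
        subst hh
        have := List.nodup_append'.mp hq.2.2.2
        exact this.2.2 (List.mem_cons_self) (by simp)
    | cons a t =>
      have hzv : r ((a :: t).getLast (by simp)) v := by
        have := (List.isChain_append.mp hp.1).2.2
        exact this _ (by rw [List.getLast?_eq_getLast (by simp)]; rfl) v rfl
      cases q' with
      | nil =>
        exfalso
        have hh := hp.2.1
        rw [List.head?_append_of_ne_nil _ (by simp : a :: t ≠ [])] at hh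
        simp at hh
        have hu : u = v := by have := hq.2.1; simp at this; exact this.symm
        have := List.nodup_append'.mp hp.2.2.2
        exact this.2.2 (List.mem_cons_self) (by simp [hh.trans hu])
      | cons a' t' =>
        have hz'v : r ((a' :: t').getLast (by simp)) v := by
          have := (List.isChain_append.mp hq.1).2.2
          exact this _ (by rw [List.getLast?_eq_getLast (by simp)]; rfl) v rfl
        have hzz' : (a' :: t').getLast (by simp) = (a :: t).getLast (by simp) :=
          up hz'v hzv
        have h1 : RP r (a :: t) u ((a :: t).getLast (by simp)) :=
          rp_dropLast hp (by simp) (List.getLast?_eq_getLast (by simp))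
        have h2 : RP r (a' :: t') u ((a :: t).getLast (by simp)) := by
          have := rp_dropLast hq (by simp) (List.getLast?_eq_getLast (by simp))
          rwa [hzz'] at this
        have hlen' : (a :: t).length ≤ n := by
          simp at hlen ⊢; omega
        rw [ih _ _ _ _ hlen' h1 h2]

theorem rp_unique' (hac : ∀ a, ¬ TransGen r a a) (up : ∀ ⦃a b c : V⦄, r a c → r b c → a = b)
    {p q : List V} {u v : V} (hp : RP r p u v) (hq : RP r q u v) : p = q :=
  rp_unique hac up p.length p q u v le_rfl hp hq

theorem rp_cons (hac : ∀ a, ¬ TransGen r a a) {q : List V} {w y t : V}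
    (harc : r w y) (hq : RP r q y t) : RP r (w :: q) w t := by
  obtain ⟨hc, hh, hl, hn⟩ := hq
  cases q with
  | nil => simp at hh
  | cons a l =>
    simp at hh; subst hh
    refine ⟨List.isChain_cons_cons.mpr ⟨harc, hc⟩, rfl, by rw [List.getLast?_cons_cons]; exact hl, ?_⟩
    rw [List.nodup_cons]
    refine ⟨?_, hn⟩
    intro hw
    exact hac w (TransGen.head' harc (chain'_rtg_head hc hw))

theorem rp_trans (hac : ∀ a, ¬ TransGen r a a) {p q : List V} {u w v : V}
    (hp : RP r p u w) (hq : RP r q w v) : RP r (p ++ q.tail) u v := by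
  cases q with
  | nil => simp [RP] at hq
  | cons b l =>
    have hb : b = w := by have := hq.2.1; simpa using this
    subst hb
    have hdisj : ∀ x ∈ p, x ∈ l → False := by
      intro x hxp hxl
      have h1 : ReflTransGen r x b := rtg_last hp hxp
      have h2 : ReflTransGen r b x := rtg_head hq (List.mem_cons_of_mem _ hxl)
      have : x = b := rtg_antisymm hac h1 h2
      subst this
      exact (List.nodup_cons.mp hq.2.2.2).1 hxl
    cases l with
    | nil =>
      have hbv : b = v := by have := hq.2.2.1; simpa using this
      subst hbv
      simpa using hp
    | cons c l' =>
      refine ⟨?_, ?_, ?_, ?_⟩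
      · simp only [List.Chain']
        rw [List.isChain_append]
        refine ⟨hp.1, (List.isChain_cons_cons.mp hq.1).2, ?_⟩
        intro x hx y hy
        rw [hp.2.2.1] at hx; simp at hx hy; subst hx; subst hy
        exact (List.isChain_cons_cons.mp hq.1).1
      · rw [List.head?_append_of_ne_nil _ (rp_ne_nil hp)]; exact hp.2.1
      · show (p ++ (c :: l')).getLast? = some v
        rw [List.getLast?_append_of_ne_nil _ (by simp : c :: l' ≠ [])]
        have := hq.2.2.1
        rwa [List.getLast?_cons_cons] at this
      · rw [List.nodup_append']
        exact ⟨hp.2.2.2, (List.nodup_cons.mp hq.2.2.2).2, fun x hx hx' => hdisj x hx hx'⟩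

theorem exists_max [Finite V] (hac : ∀ a, ¬ TransGen r a a) {S : Set V} (hS : S.Nonempty) :
    ∃ m ∈ S, ∀ z ∈ S, ReflTransGen r m z → z = m := by
  haveI : IsTrans V (fun a b => TransGen r b a) := ⟨fun a b c h1 h2 => h2.trans h1⟩
  haveI : IsIrrefl V (fun a b => TransGen r b a) := ⟨fun a => hac a⟩
  have wf := Finite.wellFounded_of_trans_of_irrefl (fun a b : V => TransGen r b a)
  obtain ⟨m, hm, hmin⟩ := wf.has_min S hS
  refine ⟨m, hm, ?_⟩
  intro z hz hrtg
  by_contra hne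
  exact hmin z hz (rtg_trans_ne hac hrtg fun h => hne h.symm)

def ArcsOf (p : List V) : List (V × V) := p.zip p.tail

theorem arcs_mem : ∀ {p : List V} {s t : V}, p.Chain' r → (s, t) ∈ ArcsOf p →
    r s t ∧ s ∈ p ∧ t ∈ p := by
  intro p
  induction p with
  | nil => intro s t _ h; simp [ArcsOf] at h
  | cons a l ih =>
    intro s t hc h
    cases l with
    | nil => simp [ArcsOf] at h
    | cons b l' =>
      have heq : ArcsOf (a :: b :: l') = (a, b) :: ArcsOf (b :: l') := rfl
      rw [heq, List.mem_cons] at h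
      rcases h with h | h
      · obtain ⟨rfl, rfl⟩ : s = a ∧ t = b := Prod.mk.inj h
        exact ⟨(List.isChain_cons_cons.mp hc).1, by simp, by simp⟩
      · obtain ⟨h1, h2, h3⟩ := ih (List.isChain_cons_cons.mp hc).2 h
        exact ⟨h1, List.mem_cons_of_mem _ h2, List.mem_cons_of_mem _ h3⟩

/-- Good pair of paths: disjoint interiors and no common arc. -/
def Good (p q : List V) : Prop :=
  (∀ x ∈ listInterior p, x ∉ listInterior q) ∧ ∀ e ∈ ArcsOf p, e ∉ ArcsOf q

theorem good_of_inter (hac : ∀ a, ¬ TransGen r a a) {p q : List V} {u₁ v₁ u₂ v₂ e : V}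
    (hp : RP r p u₁ v₁) (hq : RP r q u₂ v₂)
    (hsub : ∀ x ∈ p, x ∈ q → x = e) (he : e = u₁ ∨ e = v₁) : Good p q := by
  constructor
  · intro x hx hx'
    have hxe := hsub x (mem_of_mem_interior hx) (mem_of_mem_interior hx')
    have h2 := (mem_interior_iff hp).mp hx
    rcases he with rfl | rfl
    · exact h2.2.1 hxe
    · exact h2.2.2 hxe
  · rintro ⟨s, t⟩ hst hst'
    have h1 := arcs_mem hp.1 hst
    have h2 := arcs_mem hq.1 hst'
    have hs := hsub s h1.2.1 h2.2.1
    have ht := hsub t h1.2.2 h2.2.2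
    exact hac s (TransGen.single ((hs.trans ht.symm) ▸ h1.1))

end Aux

/- ===== Net-level auxiliary lemmas ===== -/
namespace Aux
open Relation List

variable {X : Type}

theorem treeUP {T : Net X} (ht : T.IsTree) :
    ∀ ⦃a b c : T.V⦄, T.arc a c → T.arc b c → a = b := by
  intro a b c h1 h2
  have h := (Set.ncard_le_one (Set.toFinite _)).mp (ht c)
  exact h a h1 b h2

theorem no_out_of_outdeg_zero {N : Net X} {v w : N.V} (h : N.outdeg v = 0)
    (ha : N.arc v w) : False := by
  have h2 := (Set.ncard_eq_zero (Set.toFinite _)).mp h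
  exact absurd (show w ∈ {w | N.arc v w} from ha) (by rw [h2]; simp)

theorem leaf_outdeg_zero {N : Net X} (hp : N.IsPhylo) (x : X) : N.outdeg (N.leaf x) = 0 :=
  (hp.2.1 _).mpr ⟨x, rfl⟩

theorem rigid {N : Net X} (hp : N.IsPhylo) {x : X} {t : N.V}
    (h : ReflTransGen N.arc (N.leaf x) t) : t = N.leaf x := by
  rcases h.cases_head with h | ⟨c, hc, _⟩
  · exact h.symm
  · exact absurd hc fun hc => no_out_of_outdeg_zero (leaf_outdeg_zero hp x) hc

theorem outdeg_le_two {N : Net X} (hb : N.IsBinary) (v : N.V) : N.outdeg v ≤ 2 := by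
  rcases hb.2 v with ⟨x, rfl⟩ | ⟨_, h⟩ | ⟨_, h⟩
  · rw [leaf_outdeg_zero hb.1 x]; omega
  · omega
  · omega

theorem no_three_children {N T : Net X} (hbN : N.IsBinary)
    (hacT : ∀ v, ¬ TransGen T.arc v v) (hd : N.Displays T) {w y₁ y₂ y₃ : T.V}
    (h12 : y₁ ≠ y₂) (h13 : y₁ ≠ y₃) (h23 : y₂ ≠ y₃)
    (a1 : T.arc w y₁) (a2 : T.arc w y₂) (a3 : T.arc w y₃) : False := by
  obtain ⟨φ, P, hinj, hleaf, hpath, hint, hdisj⟩ := hd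
  have key : ∀ y, T.arc w y → ∃ s, N.arc (φ w) s ∧
      (s = φ y ∨ s ∈ listInterior (P w y)) := by
    intro y hy
    have hP : RP N.arc (P w y) (φ w) (φ y) := hpath w y hy
    have hne : φ w ≠ φ y := by
      intro h
      exact hacT w (TransGen.single (by rw [hinj h] at hy ⊢; exact hy))
    obtain ⟨hc, hh, hl, hn⟩ := hP
    cases hPc : P w y with
    | nil => rw [hPc] at hh; simp at hh
    | cons m rest =>
      rw [hPc] at hh hl hn hc
      simp at hh; subst hh
      cases rest with
      | nil => simp at hl; exact absurd hl hne
      | cons s rest' =>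
        refine ⟨s, (List.isChain_cons_cons.mp hc).1, ?_⟩
        by_cases hsy : s = φ y
        · exact Or.inl hsy
        · right
          rw [← hPc]
          refine (mem_interior_iff
            (show RP N.arc (P w y) (φ w) (φ y) from hpath w y hy)).mpr
            ⟨by rw [hPc]; simp, ?_, hsy⟩
          rintro rfl
          exact (List.nodup_cons.mp hn).1 (by simp)
  obtain ⟨s₁, hs1, hd1⟩ := key y₁ a1
  obtain ⟨s₂, hs2, hd2⟩ := key y₂ a2
  obtain ⟨s₃, hs3, hd3⟩ := key y₃ a3
  have dist : ∀ y y' s s', y ≠ y' → T.arc w y → T.arc w y' →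
      (s = φ y ∨ s ∈ listInterior (P w y)) → (s' = φ y' ∨ s' ∈ listInterior (P w y')) →
      s ≠ s' := by
    rintro y y' s s' hyy hy hy' (rfl | hs) (rfl | hs')
    · intro h; exact hyy (hinj h)
    · intro h; exact hint w y' hy' s' hs' y h
    · intro h; exact hint w y hy s hs y' h.symm
    · intro h
      exact hdisj w y w y' hy hy' (fun hp => hyy (by injection hp)) s hs (h ▸ hs')
  have d12 : s₁ ≠ s₂ := dist y₁ y₂ s₁ s₂ h12 a1 a2 hd1 hd2
  have d13 : s₁ ≠ s₃ := dist y₁ y₃ s₁ s₃ h13 a1 a3 hd1 hd3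
  have d23 : s₂ ≠ s₃ := dist y₂ y₃ s₂ s₃ h23 a2 a3 hd2 hd3
  have h3 : ({s₁, s₂, s₃} : Set N.V).ncard = 3 :=
    Set.ncard_eq_three.mpr ⟨s₁, s₂, s₃, d12, d13, d23, rfl⟩
  have hsub : ({s₁, s₂, s₃} : Set N.V) ⊆ {z | N.arc (φ w) z} := by
    rintro z (rfl | rfl | rfl)
    · exact hs1
    · exact hs2
    · exact hs3
  have hle := Set.ncard_le_ncard hsub (Set.toFinite _)
  have := outdeg_le_two hbN (φ w)
  rw [h3] at hle
  exact absurd (hle.trans this) (by omega)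

end Aux

/- ===== separation in the source tree ===== -/
namespace Aux
open Relation List

variable {X : Type}

theorem cluster_sep {N T : Net X} (hbN : N.IsBinary) (hphy : T.IsPhylo) (htree : T.IsTree)
    (hd : N.Displays T) {a b c : X} (hcons : T.Consistent a b c) :
    ∃ w : T.V, ReflTransGen T.arc w (T.leaf a) ∧ ReflTransGen T.arc w (T.leaf b) ∧
      ¬ ReflTransGen T.arc w (T.leaf c) := by
  obtain ⟨hab, hac', hbc, v, w, hvw, p₁, p₂, p₃, p₄, h1, h2, h3, h4, hpw⟩ := hcons
  have h1 : RP T.arc p₁ v (T.leaf c) := h1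
  have h2 : RP T.arc p₂ v w := h2
  have h3 : RP T.arc p₃ w (T.leaf a) := h3
  have h4 : RP T.arc p₄ w (T.leaf b) := h4
  have hacT := hphy.1
  have up := treeUP htree
  -- pairwise clauses
  obtain ⟨hD1, hpw'⟩ := List.pairwise_cons.mp hpw
  obtain ⟨hD2, hpw''⟩ := List.pairwise_cons.mp hpw'
  obtain ⟨hD3, -⟩ := List.pairwise_cons.mp hpw''
  have D13 := hD1 p₃ (by simp)
  have D14 := hD1 p₄ (by simp)
  have D34 := hD3 p₄ (by simp)
  have hlab : T.leaf a ≠ T.leaf b := fun h => hab (T.leaf_inj h)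
  have hlac : T.leaf a ≠ T.leaf c := fun h => hac' (T.leaf_inj h)
  have hlbc : T.leaf b ≠ T.leaf c := fun h => hbc (T.leaf_inj h)
  have hwa : ReflTransGen T.arc w (T.leaf a) := rtg_last h3 (head_mem' h3)
  have hwb : ReflTransGen T.arc w (T.leaf b) := rtg_last h4 (head_mem' h4)
  refine ⟨w, hwa, hwb, ?_⟩
  intro hwc
  have hwla : w ≠ T.leaf a := by rintro rfl; exact hlab (rigid hphy hwb).symm
  have hwlb : w ≠ T.leaf b := by rintro rfl; exact hlab (rigid hphy hwa)
  have hwlc : w ≠ T.leaf c := by rintro rfl; exact hlac (rigid hphy hwa)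
  -- second vertex of p₃
  obtain ⟨t₃, hp₃⟩ : ∃ t, p₃ = w :: t := by
    cases p₃ with
    | nil => simp [RP] at h3
    | cons m t => have := h3.2.1; simp at this; subst this; exact ⟨t, rfl⟩
  obtain ⟨ya, t₃', rfl⟩ : ∃ ya t', t₃ = ya :: t' := by
    cases t₃ with
    | nil => exfalso; rw [hp₃] at h3; have := h3.2.2.1; simp at this; exact hwla this
    | cons ya t' => exact ⟨ya, t', rfl⟩
  have harc_a : T.arc w ya := by rw [hp₃] at h3; exact (List.isChain_cons_cons.mp h3.1).1
  have hya_a : ReflTransGen T.arc ya (T.leaf a) := rtg_last h3 (by rw [hp₃]; simp)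
  -- second vertex of p₄
  obtain ⟨t₄, hp₄⟩ : ∃ t, p₄ = w :: t := by
    cases p₄ with
    | nil => simp [RP] at h4
    | cons m t => have := h4.2.1; simp at this; subst this; exact ⟨t, rfl⟩
  obtain ⟨yb, t₄', rfl⟩ : ∃ yb t', t₄ = yb :: t' := by
    cases t₄ with
    | nil => exfalso; rw [hp₄] at h4; have := h4.2.2.1; simp at this; exact hwlb this
    | cons yb t' => exact ⟨yb, t', rfl⟩
  have harc_b : T.arc w yb := by rw [hp₄] at h4; exact (List.isChain_cons_cons.mp h4.1).1
  have hyb_b : ReflTransGen T.arc yb (T.leaf b) := rtg_last h4 (by rw [hp₄]; simp)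
  -- child towards c
  obtain ⟨yc, harc_c, hyc_c⟩ : ∃ yc, T.arc w yc ∧ ReflTransGen T.arc yc (T.leaf c) := by
    rcases hwc.cases_head with h | ⟨yc, h1', h2'⟩
    · exact absurd h.symm (fun h => hwlc h.symm)
    · exact ⟨yc, h1', h2'⟩
  have hya_w : ya ≠ w := fun h => hacT w (TransGen.single (h ▸ harc_a))
  have hyb_w : yb ≠ w := fun h => hacT w (TransGen.single (h ▸ harc_b))
  by_cases hab' : ya = yb
  · -- clash of p₃ and p₄ interiors
    have hya_la : ya ≠ T.leaf a := by
      rintro rfl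
      rw [← hab'] at hyb_b
      exact hlab (rigid hphy hyb_b).symm
    have hyb_lb : yb ≠ T.leaf b := by
      rintro rfl
      rw [hab'] at hya_a
      exact hlab (rigid hphy hya_a)
    have int3 : ya ∈ listInterior p₃ :=
      (mem_interior_iff h3).mpr ⟨by rw [hp₃]; simp, hya_w, hya_la⟩
    have int4 : ya ∈ listInterior p₄ :=
      (mem_interior_iff h4).mpr ⟨by rw [hp₄, hab']; simp, hya_w, by rw [hab']; exact hyb_lb⟩
    exact D34 ya int3 int4
  · by_cases hca : yc = ya
    · -- clash of p₁ and p₃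
      obtain ⟨py, hpy⟩ := exists_rp hacT hyc_c
      have hq : RP T.arc (w :: py) w (T.leaf c) := rp_cons hacT harc_c hpy
      have hP : RP T.arc (p₂ ++ py) v (T.leaf c) := rp_trans hacT h2 hq
      have hp1eq : p₁ = p₂ ++ py := rp_unique' hacT up h1 hP
      have hvwRTG : ReflTransGen T.arc v w := rtg_last h2 (head_mem' h2)
      have hyc_v : yc ≠ v := by
        rintro rfl
        exact hacT yc (Relation.TransGen.tail' hvwRTG harc_c)
      have hyc_lc : yc ≠ T.leaf c := by
        rintro rfl
        rw [← hca] at hya_a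
        exact hlac (rigid hphy hya_a)
      have int1 : yc ∈ listInterior p₁ :=
        (mem_interior_iff h1).mpr
          ⟨by rw [hp1eq]; exact List.mem_append_right _ (head_mem' hpy), hyc_v, hyc_lc⟩
      have hya_la : ya ≠ T.leaf a := by
        rintro rfl
        rw [hca] at hyc_c
        exact hlac.symm (rigid hphy hyc_c)
      have int3 : ya ∈ listInterior p₃ :=
        (mem_interior_iff h3).mpr ⟨by rw [hp₃]; simp, hya_w, hya_la⟩
      exact D13 yc int1 (by rw [hca]; exact int3)
    · by_cases hcb : yc = yb
      · -- clash of p₁ and p₄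
        obtain ⟨py, hpy⟩ := exists_rp hacT hyc_c
        have hq : RP T.arc (w :: py) w (T.leaf c) := rp_cons hacT harc_c hpy
        have hP : RP T.arc (p₂ ++ py) v (T.leaf c) := rp_trans hacT h2 hq
        have hp1eq : p₁ = p₂ ++ py := rp_unique' hacT up h1 hP
        have hvwRTG : ReflTransGen T.arc v w := rtg_last h2 (head_mem' h2)
        have hyc_v : yc ≠ v := by
          rintro rfl
          exact hacT yc (Relation.TransGen.tail' hvwRTG harc_c)
        have hyc_lc : yc ≠ T.leaf c := by
          rintro rfl
          rw [← hcb] at hyb_b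
          exact hlbc (rigid hphy hyb_b)
        have int1 : yc ∈ listInterior p₁ :=
          (mem_interior_iff h1).mpr
            ⟨by rw [hp1eq]; exact List.mem_append_right _ (head_mem' hpy), hyc_v, hyc_lc⟩
        have hyb_lb : yb ≠ T.leaf b := by
          rintro rfl
          rw [hcb] at hyc_c
          exact hlbc.symm (rigid hphy hyc_c)
        have int4 : yb ∈ listInterior p₄ :=
          (mem_interior_iff h4).mpr ⟨by rw [hp₄]; simp, hyb_w, hyb_lb⟩
        exact D14 yc int1 (by rw [hcb]; exact int4)
      · exact no_three_children hbN hacT hd hca hcb hab' harc_c harc_a harc_b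

end Aux

/- ===== building the triplet configuration in the target tree ===== -/
namespace Aux
open Relation List

variable {X : Type}

theorem build_config {T : Net X} (hphy : T.IsPhylo) (htree : T.IsTree) {a b c : X}
    (hab : a ≠ b) (hac' : a ≠ c) (hbc : b ≠ c) {u : T.V}
    (hua : ReflTransGen T.arc u (T.leaf a)) (hub : ReflTransGen T.arc u (T.leaf b))
    (huc : ¬ ReflTransGen T.arc u (T.leaf c)) :
    ∃ (v w : T.V) (p₁ p₂ p₃ p₄ : List T.V), v ≠ w ∧
      RP T.arc p₁ v (T.leaf c) ∧ RP T.arc p₂ v w ∧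
      RP T.arc p₃ w (T.leaf a) ∧ RP T.arc p₄ w (T.leaf b) ∧
      Good p₁ p₂ ∧ Good p₁ p₃ ∧ Good p₁ p₄ ∧ Good p₂ p₃ ∧ Good p₂ p₄ ∧ Good p₃ p₄ := by
  have hacT := hphy.1
  have up := treeUP htree
  have hlab : T.leaf a ≠ T.leaf b := fun h => hab (T.leaf_inj h)
  have hlac : T.leaf a ≠ T.leaf c := fun h => hac' (T.leaf_inj h)
  -- w : maximal vertex reaching both a and b
  obtain ⟨w, hwS, hwmax⟩ := exists_max (r := T.arc) hacT
    (S := {z | ReflTransGen T.arc z (T.leaf a) ∧ ReflTransGen T.arc z (T.leaf b)})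
    ⟨u, hua, hub⟩
  obtain ⟨hwa, hwb⟩ := hwS
  have hwla : w ≠ T.leaf a := by rintro rfl; exact hlab (rigid hphy hwb).symm
  have hwlb : w ≠ T.leaf b := by rintro rfl; exact hlab (rigid hphy hwa)
  obtain ⟨ya, haya, hya_a⟩ : ∃ y, T.arc w y ∧ ReflTransGen T.arc y (T.leaf a) := by
    rcases hwa.cases_head with h | h
    · exact absurd h hwla
    · exact h
  obtain ⟨yb, hayb, hyb_b⟩ : ∃ y, T.arc w y ∧ ReflTransGen T.arc y (T.leaf b) := by
    rcases hwb.cases_head with h | h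
    · exact absurd h hwlb
    · exact h
  have hyab : ya ≠ yb := by
    rintro rfl
    have : ya = w := hwmax ya ⟨hya_a, hyb_b⟩ (ReflTransGen.single haya)
    exact hacT w (TransGen.single (this ▸ haya))
  -- w is below u, hence w does not reach c
  have huw : ReflTransGen T.arc u w := by
    rcases rtg_comparable up hua hwa with h | h
    · exact h
    · rw [hwmax u ⟨hua, hub⟩ h]
  have hwc : ¬ ReflTransGen T.arc w (T.leaf c) := fun h => huc (huw.trans h)
  -- root
  obtain ⟨ρ, -, -, hρ⟩ := hphy.2.2.2.1
  -- v : maximal vertex reaching both w and c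
  obtain ⟨v, hvS, hvmax⟩ := exists_max (r := T.arc) hacT
    (S := {z | ReflTransGen T.arc z w ∧ ReflTransGen T.arc z (T.leaf c)})
    ⟨ρ, hρ w, hρ (T.leaf c)⟩
  obtain ⟨hvw, hvc⟩ := hvS
  have hvnw : v ≠ w := by rintro rfl; exact hwc hvc
  have hvlc : v ≠ T.leaf c := by
    rintro rfl
    exact hvnw (rigid hphy hvw).symm
  obtain ⟨yw, hayw, hyw_w⟩ : ∃ y, T.arc v y ∧ ReflTransGen T.arc y w := by
    rcases hvw.cases_head with h | h
    · exact absurd h.symm (Ne.symm hvnw)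
    · exact h
  obtain ⟨yc, hayc, hyc_c⟩ : ∃ y, T.arc v y ∧ ReflTransGen T.arc y (T.leaf c) := by
    rcases hvc.cases_head with h | h
    · exact absurd h hvlc
    · exact h
  have hywc : yw ≠ yc := by
    rintro rfl
    have : yw = v := hvmax yw ⟨hyw_w, hyc_c⟩ (ReflTransGen.single hayw)
    exact hacT v (TransGen.single (this ▸ hayw))
  -- the four paths
  obtain ⟨qa, hqa⟩ := exists_rp hacT hya_a
  obtain ⟨qb, hqb⟩ := exists_rp hacT hyb_b
  obtain ⟨qw, hqw⟩ := exists_rp hacT hyw_w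
  obtain ⟨qc, hqc⟩ := exists_rp hacT hyc_c
  have h1 : RP T.arc (v :: qc) v (T.leaf c) := rp_cons hacT hayc hqc
  have h2 : RP T.arc (v :: qw) v w := rp_cons hacT hayw hqw
  have h3 : RP T.arc (w :: qa) w (T.leaf a) := rp_cons hacT haya hqa
  have h4 : RP T.arc (w :: qb) w (T.leaf b) := rp_cons hacT hayb hqb
  -- membership facts
  have mem1 : ∀ x ∈ v :: qc, x = v ∨ ReflTransGen T.arc yc x := by
    intro x hx
    rcases List.mem_cons.mp hx with h | h
    · exact Or.inl h
    · exact Or.inr (rtg_head hqc h)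
  have mem2 : ∀ x ∈ v :: qw, x = v ∨ ReflTransGen T.arc yw x := by
    intro x hx
    rcases List.mem_cons.mp hx with h | h
    · exact Or.inl h
    · exact Or.inr (rtg_head hqw h)
  have mem3 : ∀ x ∈ w :: qa, ReflTransGen T.arc w x := fun x hx => rtg_head h3 hx
  have mem4 : ∀ x ∈ w :: qb, ReflTransGen T.arc w x := fun x hx => rtg_head h4 hx
  have mem2' : ∀ x ∈ v :: qw, ReflTransGen T.arc x w := fun x hx => rtg_last h2 hx
  have mem3' : ∀ x ∈ w :: qa, x = w ∨ ReflTransGen T.arc ya x := by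
    intro x hx
    rcases List.mem_cons.mp hx with h | h
    · exact Or.inl h
    · exact Or.inr (rtg_head hqa h)
  have mem4' : ∀ x ∈ w :: qb, x = w ∨ ReflTransGen T.arc yb x := by
    intro x hx
    rcases List.mem_cons.mp hx with h | h
    · exact Or.inl h
    · exact Or.inr (rtg_head hqb h)
  -- intersection facts
  have i12 : ∀ x ∈ v :: qc, x ∈ v :: qw → x = v := by
    intro x hx hx'
    rcases mem1 x hx with h | h
    · exact h
    · rcases mem2 x hx' with h' | h'
      · exact h'
      · exact (sibling hacT up hayc hayw (Ne.symm hywc) h h').elim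
  have i13 : ∀ x ∈ v :: qc, x ∈ w :: qa → False := by
    intro x hx hx'
    have hwx := mem3 x hx'
    rcases mem1 x hx with h | h
    · subst h
      exact hvnw (rtg_antisymm hacT hvw hwx)
    · rcases rtg_comparable up h hwx with h' | h'
      ·
        exact sibling hacT up hayc hayw hywc.symm h' hyw_w
      · -- w reaches yc, hence w reaches c
        exact hwc (h'.trans hyc_c)
  have i14 : ∀ x ∈ v :: qc, x ∈ w :: qb → False := by
    intro x hx hx'
    have hwx := mem4 x hx'
    rcases mem1 x hx with h | h
    · subst h
      exact hvnw (rtg_antisymm hacT hvw hwx)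
    · rcases rtg_comparable up h hwx with h' | h'
      · exact sibling hacT up hayc hayw hywc.symm h' hyw_w
      · exact hwc (h'.trans hyc_c)
  have i23 : ∀ x ∈ v :: qw, x ∈ w :: qa → x = w := by
    intro x hx hx'
    exact rtg_antisymm hacT (mem2' x hx) (mem3 x hx')
  have i24 : ∀ x ∈ v :: qw, x ∈ w :: qb → x = w := by
    intro x hx hx'
    exact rtg_antisymm hacT (mem2' x hx) (mem4 x hx')
  have i34 : ∀ x ∈ w :: qa, x ∈ w :: qb → x = w := by
    intro x hx hx'
    rcases mem3' x hx with h | h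
    · exact h
    · rcases mem4' x hx' with h' | h'
      · exact h'
      · exact (sibling hacT up haya hayb hyab h h').elim
  refine ⟨v, w, v :: qc, v :: qw, w :: qa, w :: qb, hvnw, h1, h2, h3, h4,
    good_of_inter hacT h1 h2 i12 (Or.inl rfl),
    good_of_inter hacT h1 h3 (fun x hx hx' => (i13 x hx hx').elim) (Or.inl rfl),
    good_of_inter hacT h1 h4 (fun x hx hx' => (i14 x hx hx').elim) (Or.inl rfl),
    good_of_inter hacT h2 h3 i23 (Or.inr rfl),
    good_of_inter hacT h2 h4 i24 (Or.inr rfl),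
    good_of_inter hacT h3 h4 i34 (Or.inl rfl)⟩

end Aux

/- ===== lifting paths through a subdivision ===== -/
namespace Aux
open Relation List

def liftPath {TV NV : Type} (φ : TV → NV) (P : TV → TV → List NV) : List TV → List NV
  | [] => []
  | [t] => [φ t]
  | t₁ :: t₂ :: rest => (P t₁ t₂).dropLast ++ liftPath φ P (t₂ :: rest)

variable {X : Type} {N T : Net X} {φ : T.V → N.V} {P : T.V → T.V → List N.V}

theorem lift_spec
    (hinj : Function.Injective φ)
    (hpath : ∀ u v, T.arc u v → N.IsDiPath (P u v) (φ u) (φ v))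
    (hint : ∀ u v, T.arc u v → ∀ w ∈ listInterior (P u v), ∀ z, φ z ≠ w)
    (hdisj : ∀ u v u' v', T.arc u v → T.arc u' v' → (u, v) ≠ (u', v') →
      ∀ w ∈ listInterior (P u v), w ∉ listInterior (P u' v')) :
    ∀ (p : List T.V) (t₀ t₁ : T.V), RP T.arc p t₀ t₁ →
      RP N.arc (liftPath φ P p) (φ t₀) (φ t₁) ∧
      ∀ x ∈ liftPath φ P p, (∃ t ∈ p, φ t = x) ∨
        ∃ s s', (s, s') ∈ ArcsOf p ∧ x ∈ listInterior (P s s') := by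
  intro p
  induction p with
  | nil => intro t₀ t₁ hp; exact absurd rfl (rp_ne_nil hp)
  | cons a l ih =>
    intro t₀ t₁ hp
    have ha : a = t₀ := by have := hp.2.1; simpa using this
    subst ha
    cases l with
    | nil =>
      have ht1 : a = t₁ := by have := hp.2.2.1; simpa using this
      subst ht1
      constructor
      · exact ⟨by simp [liftPath, List.Chain', List.isChain_singleton], by simp [liftPath], by simp [liftPath], by simp [liftPath]⟩
      · intro x hx
        simp [liftPath] at hx
        exact Or.inl ⟨a, by simp, hx.symm⟩
    | cons b rest =>
      have harc : T.arc a b := (List.isChain_cons_cons.mp hp.1).1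
      have hptail : RP T.arc (b :: rest) b t₁ := by
        refine ⟨(List.isChain_cons_cons.mp hp.1).2, rfl, ?_, (List.nodup_cons.mp hp.2.2.2).2⟩
        have := hp.2.2.1; rwa [List.getLast?_cons_cons] at this
      obtain ⟨hL, hLmem⟩ := ih b t₁ hptail
      have hanotin : a ∉ b :: rest := (List.nodup_cons.mp hp.2.2.2).1
      have hab : a ≠ b := fun h => hanotin (by simp [h])
      have hP : RP N.arc (P a b) (φ a) (φ b) := hpath a b harc
      have hfne : φ a ≠ φ b := fun h => hab (hinj h)
      obtain ⟨Q, hQ⟩ := eq_concat_of_getLast? hP.2.2.1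
      obtain ⟨Q', hQ'⟩ : ∃ Q', Q = φ a :: Q' := by
        cases Q with
        | nil =>
          exfalso
          rw [hQ] at hP
          have := hP.2.1; simp at this
          exact hfne this.symm
        | cons q0 Q' =>
          have := hP.2.1
          rw [hQ, List.head?_append_of_ne_nil _ (by simp : q0 :: Q' ≠ [])] at this
          simp at this
          exact ⟨Q', by rw [this]⟩
      subst hQ'
      have hintQ : listInterior (P a b) = Q' := by
        rw [hQ]
        simp [listInterior]
      have hexp : liftPath φ P (a :: b :: rest) = (φ a :: Q') ++ liftPath φ P (b :: rest) := by
        show (P a b).dropLast ++ _ = _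
        rw [hQ, show φ a :: Q' ++ [φ b] = (φ a :: Q') ++ [φ b] from rfl,
          List.dropLast_concat]
      have hLne : liftPath φ P (b :: rest) ≠ [] := fun h => by
        have := hL.2.1; rw [h] at this; simp at this
      have memQ : ∀ x ∈ φ a :: Q', x = φ a ∨ x ∈ listInterior (P a b) := by
        intro x hx
        rcases List.mem_cons.mp hx with h | h
        · exact Or.inl h
        · exact Or.inr (hintQ ▸ h)
      have tailArc : ∀ s s', (s, s') ∈ ArcsOf (b :: rest) → T.arc s s' :=
        fun s s' h => (arcs_mem hptail.1 h).1
      have arcsCons : ArcsOf (a :: b :: rest) = (a, b) :: ArcsOf (b :: rest) := rfl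
      have hdisjQL : ∀ x ∈ φ a :: Q', x ∉ liftPath φ P (b :: rest) := by
        intro x hx hx'
        rcases hLmem x hx' with ⟨t, htmem, hteq⟩ | ⟨s, s', hss, hxint⟩
        · rcases memQ x hx with h | h
          · subst hteq
            exact hanotin (by rw [hinj h] at htmem; exact htmem)
          · exact hint a b harc x h t hteq
        · rcases memQ x hx with h | h
          · subst h
            exact hint s s' (tailArc s s' hss) _ hxint a rfl
          · refine hdisj a b s s' harc (tailArc s s' hss) ?_ x h hxint
            intro hpair
            have : a = s := by injection hpair
            exact hanotin (this ▸ (arcs_mem hptail.1 hss).2.1)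
      refine ⟨⟨?_, ?_, ?_, ?_⟩, ?_⟩
      · -- chain'
        rw [hexp]
        simp only [List.Chain']
        rw [List.isChain_append]
        have hcP := hP.1
        simp only [RP, Net.IsDiPath, List.Chain'] at hcP
        rw [hQ, List.isChain_append] at hcP
        refine ⟨hcP.1, hL.1, ?_⟩
        intro x hx y hy
        rw [hL.2.1] at hy
        simp at hy
        subst hy
        exact hcP.2.2 x hx (φ b) rfl
      · rw [hexp, List.head?_append_of_ne_nil _ (by simp : φ a :: Q' ≠ [])]; rfl
      · rw [hexp, List.getLast?_append_of_ne_nil _ hLne]; exact hL.2.2.1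
      · rw [hexp, List.nodup_append']
        refine ⟨?_, hL.2.2.2, hdisjQL⟩
        have := hP.2.2.2
        rw [hQ, List.nodup_append'] at this
        exact this.1
      · intro x hx
        rw [hexp] at hx
        rcases List.mem_append.mp hx with h | h
        · rcases memQ x h with h' | h'
          · exact Or.inl ⟨a, by simp, h'.symm⟩
          · exact Or.inr ⟨a, b, by rw [arcsCons]; simp, h'⟩
        · rcases hLmem x h with ⟨t, htmem, hteq⟩ | ⟨s, s', hss, hxint⟩
          · exact Or.inl ⟨t, List.mem_cons_of_mem _ htmem, hteq⟩
          · exact Or.inr ⟨s, s', by rw [arcsCons]; exact List.mem_cons_of_mem _ hss, hxint⟩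

theorem lift_interior
    (hinj : Function.Injective φ)
    (hpath : ∀ u v, T.arc u v → N.IsDiPath (P u v) (φ u) (φ v))
    (hint : ∀ u v, T.arc u v → ∀ w ∈ listInterior (P u v), ∀ z, φ z ≠ w)
    (hdisj : ∀ u v u' v', T.arc u v → T.arc u' v' → (u, v) ≠ (u', v') →
      ∀ w ∈ listInterior (P u v), w ∉ listInterior (P u' v'))
    {p : List T.V} {t₀ t₁ : T.V} (hp : RP T.arc p t₀ t₁) {x : N.V}
    (hx : x ∈ listInterior (liftPath φ P p)) :
    (∃ t ∈ listInterior p, φ t = x) ∨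
      ∃ s s', (s, s') ∈ ArcsOf p ∧ x ∈ listInterior (P s s') := by
  obtain ⟨hL, hLmem⟩ := lift_spec hinj hpath hint hdisj p t₀ t₁ hp
  obtain ⟨hmem, hne0, hne1⟩ := (mem_interior_iff hL).mp hx
  rcases hLmem x hmem with ⟨t, ht, rfl⟩ | h
  · left
    refine ⟨t, (mem_interior_iff hp).mpr ⟨ht, ?_, ?_⟩, rfl⟩
    · rintro rfl; exact hne0 rfl
    · rintro rfl; exact hne1 rfl
  · exact Or.inr h

theorem lift_good
    (hinj : Function.Injective φ)
    (hpath : ∀ u v, T.arc u v → N.IsDiPath (P u v) (φ u) (φ v))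
    (hint : ∀ u v, T.arc u v → ∀ w ∈ listInterior (P u v), ∀ z, φ z ≠ w)
    (hdisj : ∀ u v u' v', T.arc u v → T.arc u' v' → (u, v) ≠ (u', v') →
      ∀ w ∈ listInterior (P u v), w ∉ listInterior (P u' v'))
    {p q : List T.V} {t₀ t₁ s₀ s₁ : T.V} (hp : RP T.arc p t₀ t₁) (hq : RP T.arc q s₀ s₁)
    (hg : Good p q) :
    ∀ x ∈ listInterior (liftPath φ P p), x ∉ listInterior (liftPath φ P q) := by
  intro x hx hx'
  rcases lift_interior hinj hpath hint hdisj hp hx with ⟨t, ht, rfl⟩ | ⟨s, s', hss, hxint⟩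
  · rcases lift_interior hinj hpath hint hdisj hq hx' with ⟨t', ht', he⟩ | ⟨r1, r2, hrr, hxint'⟩
    · exact hg.1 t ht ((hinj he) ▸ ht')
    · exact hint r1 r2 (arcs_mem hq.1 hrr).1 _ hxint' t rfl
  · rcases lift_interior hinj hpath hint hdisj hq hx' with ⟨t', ht', he⟩ | ⟨r1, r2, hrr, hxint'⟩
    · exact hint s s' (arcs_mem hp.1 hss).1 x hxint t' he
    · by_cases hpair : (s, s') = (r1, r2)
      · obtain ⟨h1, h2⟩ : s = r1 ∧ s' = r2 := Prod.mk.inj hpair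
        subst h1; subst h2
        exact hg.2 (s, s') hss hrr
      · exact hdisj s s' r1 r2 (arcs_mem hp.1 hss).1 (arcs_mem hq.1 hrr).1 hpair x hxint hxint'

end Aux


/-- if every tree in a collection `TT` of phylogenetic trees on `X` is
displayed by the binary level-1 network `N`, the softwired cluster system of the binary
level-1 network `N'` contains the union of the cluster systems of the trees in `TT`,
and `R(N)` equals the union of the triplet systems of the trees in `TT`, then
`R(N) ⊆ R(N')`. -/
theorem stmt19 {X : Type} (N N' : Net X)
    (hlev : N.IsLevel1) (hlev' : N'.IsLevel1)
    (TT : Net X → Prop)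
    (htrees : ∀ T, TT T → T.IsPhylo ∧ T.IsTree ∧ N.Displays T)
    (hclus : ∀ T, TT T → T.clusterSystem ⊆ N'.softwired)
    (htrip : ∀ a b c : X, N.Consistent a b c ↔ ∃ T, TT T ∧ T.Consistent a b c) :
    N.tripletSet ⊆ N'.tripletSet := by
  intro t ht
  obtain ⟨a, b, hfst, hcons⟩ := ht
  have hab := hcons.1
  have hac := hcons.2.1
  have hbc := hcons.2.2.1
  obtain ⟨T, hTT, hTcons⟩ := (htrip a b t.2).mp hcons
  obtain ⟨hphyT, htreeT, hdispT⟩ := htrees T hTT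
  obtain ⟨w, hwa, hwb, hwc⟩ := Aux.cluster_sep hlev.1 hphyT htreeT hdispT hTcons
  have hsoft := hclus T hTT (show T.cluster w ∈ T.clusterSystem from ⟨w, rfl⟩)
  obtain ⟨T'', hphy'', htree'', hdisp'', hC⟩ := hsoft
  obtain ⟨u'', hCeq⟩ := hC
  have hua : Relation.ReflTransGen T''.arc u'' (T''.leaf a) := by
    have h : a ∈ T.cluster w := hwa
    rw [hCeq] at h; exact h
  have hub : Relation.ReflTransGen T''.arc u'' (T''.leaf b) := by
    have h : b ∈ T.cluster w := hwb
    rw [hCeq] at h; exact h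
  have huc : ¬ Relation.ReflTransGen T''.arc u'' (T''.leaf t.2) := by
    have h : t.2 ∉ T.cluster w := hwc
    rw [hCeq] at h; exact h
  obtain ⟨v, w', p₁, p₂, p₃, p₄, hvw, h1, h2, h3, h4, g12, g13, g14, g23, g24, g34⟩ :=
    Aux.build_config hphy'' htree'' hab hac hbc hua hub huc
  obtain ⟨φ, P, hinj, hleafφ, hpath, hint, hdisjP⟩ := hdisp''
  refine ⟨a, b, hfst, hab, hac, hbc, φ v, φ w', fun h => hvw (hinj h),
    Aux.liftPath φ P p₁, Aux.liftPath φ P p₂, Aux.liftPath φ P p₃, Aux.liftPath φ P p₄,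
    ?_, ?_, ?_, ?_, ?_⟩
  · have h := (Aux.lift_spec hinj hpath hint hdisjP p₁ v (T''.leaf t.2) h1).1
    rwa [hleafφ t.2] at h
  · exact (Aux.lift_spec hinj hpath hint hdisjP p₂ v w' h2).1
  · have h := (Aux.lift_spec hinj hpath hint hdisjP p₃ w' (T''.leaf a) h3).1
    rwa [hleafφ a] at h
  · have h := (Aux.lift_spec hinj hpath hint hdisjP p₄ w' (T''.leaf b) h4).1
    rwa [hleafφ b] at h
  · refine List.pairwise_cons.mpr ⟨?_, List.pairwise_cons.mpr ⟨?_,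
      List.pairwise_cons.mpr ⟨?_, List.pairwise_singleton _ _⟩⟩⟩
    · intro q hq
      rcases List.mem_cons.mp hq with rfl | hq
      · exact Aux.lift_good hinj hpath hint hdisjP h1 h2 g12
      rcases List.mem_cons.mp hq with rfl | hq
      · exact Aux.lift_good hinj hpath hint hdisjP h1 h3 g13
      rcases List.mem_cons.mp hq with rfl | hq
      · exact Aux.lift_good hinj hpath hint hdisjP h1 h4 g14
      · simp at hq
    · intro q hq
      rcases List.mem_cons.mp hq with rfl | hq
      · exact Aux.lift_good hinj hpath hint hdisjP h2 h3 g23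
      rcases List.mem_cons.mp hq with rfl | hq
      · exact Aux.lift_good hinj hpath hint hdisjP h2 h4 g24
      · simp at hq
    · intro q hq
      rcases List.mem_cons.mp hq with rfl | hq
      · exact Aux.lift_good hinj hpath hint hdisjP h3 h4 g34
      · simp at hq
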